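/- Let G be a finite group, p a prime number, and H, K subgroups of G. Then there exists g ∈ G such that H ∩ gKg⁻¹ is a p-subnormal subgroup of both H and gKg⁻¹ if and only if O^p(H) and O^p(K) are conjugate subgroups of G. -/

import Mathlib

/-- `K` is a `p`-subnormal subgroup of `H` (both viewed as subgroups of an ambient group
`G`): there is a chain of subgroups `K = K₀ ≤ K₁ ≤ ⋯ ≤ K_t = H` in which each `K_i` is a
normal subgroup of `K_{i+1}` of index `p`. -/
def IsPSubnormalIn {G : Type*} [Group G] (p : ℕ) (K H : Subgroup G) : Prop :=
  ∃ (t : ℕ) (f : Fin (t + 1) → Subgroup G),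
    f 0 = K ∧ f (Fin.last t) = H ∧
    ∀ i : Fin t, f i.castSucc ≤ f i.succ ∧
      ((f i.castSucc).subgroupOf (f i.succ)).Normal ∧
      (f i.castSucc).relIndex (f i.succ) = p

/-- `O^p(G)`: the intersection of all normal subgroups `N ⊴ G` such that `G/N` is a
`p`-group. -/
def pResidual (p : ℕ) (G : Type*) [Group G] : Subgroup G :=
  sInf {N : Subgroup G | ∃ h : N.Normal, letI := h; IsPGroup p (G ⧸ N)}

/-- For a subgroup `H ≤ G`, the subgroup `O^p(H)` of `H` regarded as a subgroup of `G`. -/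
def pResidualIn {G : Type*} [Group G] (p : ℕ) (H : Subgroup G) : Subgroup G :=
  (pResidual p H).map H.subtype

/-- The conjugate subgroup `g K g⁻¹`. -/
def conjSub {G : Type*} [Group G] (g : G) (K : Subgroup G) : Subgroup G :=
  K.map (MulAut.conj g).toMonoidHom


open Subgroup

section Aux

variable {G : Type*} [Group G] {p : ℕ}

lemma orderOf_conj' (g x : G) : orderOf (g * x * g⁻¹) = orderOf x := by
  have := orderOf_injective (MulAut.conj g).toMonoidHom (MulEquiv.injective _) x
  simpa [MulAut.conj_apply] using this

/-- The set of `p'`-elements of a subgroup `H`. -/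
def pSet (p : ℕ) {G : Type*} [Group G] (H : Subgroup G) : Set G :=
  {x : G | x ∈ H ∧ ¬ p ∣ orderOf x}

lemma subgroupOf_normal_of_conj {A B : Subgroup G}
    (h : ∀ b ∈ B, ∀ a ∈ A, b * a * b⁻¹ ∈ A) : (A.subgroupOf B).Normal := by
  constructor
  rintro ⟨n, hnB⟩ hnA g
  rw [mem_subgroupOf] at hnA ⊢
  exact h g g.2 n hnA

lemma conj_mem_of_subgroupOf_normal {A B : Subgroup G} (hN : (A.subgroupOf B).Normal)
    {a b : G} (ha : a ∈ A) (haB : a ∈ B) (hb : b ∈ B) : b * a * b⁻¹ ∈ A := by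
  have := hN.conj_mem ⟨a, haB⟩ (mem_subgroupOf.2 ha) ⟨b, hb⟩
  rw [mem_subgroupOf] at this
  simpa using this

lemma relindex_map_subtype (W : Subgroup G) (X Y : Subgroup W) :
    (X.map W.subtype).relIndex (Y.map W.subtype) = X.relIndex Y := by
  have := relIndex_comap (H := X.map W.subtype) W.subtype Y
  rw [comap_map_eq_self_of_injective W.subtype_injective] at this
  exact this.symm

end Aux

section Closure

variable {G : Type*} [Group G] {p : ℕ}

lemma exists_pow_orderOf_not_dvd [Finite G] (hp : p.Prime) (x : G) :
    ∃ k, ¬ p ∣ orderOf (x ^ p ^ k) := by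
  refine ⟨(orderOf x).factorization p, ?_⟩
  have hx0 : orderOf x ≠ 0 := (orderOf_pos x).ne'
  rw [orderOf_pow, Nat.gcd_eq_right (Nat.ordProj_dvd _ _)]
  exact Nat.not_dvd_ordCompl hp hx0

lemma pResidual_eq_closure (hp : p.Prime) (G : Type*) [Group G] [Finite G] :
    pResidual p G = Subgroup.closure {x : G | ¬ p ∣ orderOf x} := by
  set S : Set G := {x : G | ¬ p ∣ orderOf x} with hS
  set T := Subgroup.closure S with hT
  have hconj : ∀ g : G, ∀ x ∈ T, g * x * g⁻¹ ∈ T := by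
    intro g x hx
    have h1 : T.map (MulAut.conj g).toMonoidHom = Subgroup.closure
        ((MulAut.conj g).toMonoidHom '' S) := MonoidHom.map_closure _ _
    have h2 : (MulAut.conj g).toMonoidHom '' S ⊆ S := by
      rintro _ ⟨y, hy, rfl⟩
      simp only [hS, Set.mem_setOf_eq] at hy ⊢
      simpa [MulAut.conj_apply, orderOf_conj'] using hy
    have h3 : T.map (MulAut.conj g).toMonoidHom ≤ T := by
      rw [h1]; exact Subgroup.closure_mono h2
    exact h3 ⟨x, hx, by simp [MulAut.conj_apply]⟩
  have hTN : T.Normal := ⟨fun n hn g => hconj g n hn⟩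
  apply le_antisymm
  · apply sInf_le
    refine ⟨hTN, ?_⟩
    intro q
    obtain ⟨x, rfl⟩ := QuotientGroup.mk_surjective q
    obtain ⟨k, hk⟩ := exists_pow_orderOf_not_dvd hp x
    refine ⟨k, ?_⟩
    rw [← QuotientGroup.mk_pow, QuotientGroup.eq_one_iff]
    exact Subgroup.subset_closure hk
  · apply le_sInf
    rintro N ⟨hN, hNp⟩
    rw [Subgroup.closure_le]
    intro x hx
    haveI := hN
    set y : G ⧸ N := QuotientGroup.mk x with hy
    obtain ⟨k, hk⟩ := hNp y
    have h1 : orderOf y ∣ p ^ k := orderOf_dvd_of_pow_eq_one hk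
    have h2 : orderOf y ∣ orderOf x := orderOf_map_dvd (QuotientGroup.mk' N) x
    obtain ⟨j, hj, hjy⟩ := (Nat.dvd_prime_pow hp).mp h1
    have hj0 : j = 0 := by
      by_contra hj0
      exact hx (dvd_trans (hjy ▸ dvd_pow_self p hj0) h2)
    have : y = 1 := orderOf_eq_one_iff.mp (by rw [hjy, hj0, pow_zero])
    rwa [hy, QuotientGroup.eq_one_iff] at this

lemma pResidualIn_eq_closure [Finite G] (hp : p.Prime) (H : Subgroup G) :
    pResidualIn p H = Subgroup.closure (pSet p H) := by
  rw [pResidualIn, pResidual_eq_closure hp, MonoidHom.map_closure]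
  congr 1
  ext x
  simp only [Set.mem_image, Set.mem_setOf_eq, pSet, Subgroup.coe_subtype]
  constructor
  · rintro ⟨y, hy, rfl⟩
    exact ⟨y.2, by rwa [Subgroup.orderOf_coe]⟩
  · rintro ⟨hxH, hxo⟩
    refine ⟨⟨x, hxH⟩, ?_, rfl⟩
    show ¬ p ∣ orderOf (⟨x, hxH⟩ : H)
    rwa [← Subgroup.orderOf_coe ⟨x, hxH⟩]

end Closure

section ConjSub

variable {G : Type*} [Group G] {p : ℕ}

lemma conjSub_conjSub (a b : G) (K : Subgroup G) :
    conjSub a (conjSub b K) = conjSub (a * b) K := by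
  unfold conjSub
  rw [Subgroup.map_map]
  congr 1
  ext x
  simp [MulAut.conj_apply, mul_assoc]

@[simp] lemma conjSub_one (K : Subgroup G) : conjSub 1 K = K := by
  unfold conjSub
  ext x
  simp [MulAut.conj_apply]

lemma mem_conjSub {g x : G} {K : Subgroup G} :
    x ∈ conjSub g K ↔ ∃ y ∈ K, g * y * g⁻¹ = x := by
  unfold conjSub
  simp [MulAut.conj_apply]

lemma pResidualIn_conjSub [Finite G] (hp : p.Prime) (g : G) (H : Subgroup G) :
    conjSub g (pResidualIn p H) = pResidualIn p (conjSub g H) := by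
  rw [pResidualIn_eq_closure hp, pResidualIn_eq_closure hp]
  unfold conjSub
  rw [MonoidHom.map_closure]
  congr 1
  ext x
  constructor
  · rintro ⟨y, ⟨hyH, hyo⟩, rfl⟩
    refine ⟨mem_conjSub.2 ⟨y, hyH, by simp [MulAut.conj_apply]⟩, ?_⟩
    simpa [MulAut.conj_apply, orderOf_conj'] using hyo
  · rintro ⟨hxK, hxo⟩
    obtain ⟨y, hyH, rfl⟩ := mem_conjSub.1 hxK
    refine ⟨y, ⟨hyH, ?_⟩, by simp [MulAut.conj_apply]⟩
    rwa [orderOf_conj'] at hxo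

lemma pResidualIn_le (H : Subgroup G) : pResidualIn p H ≤ H :=
  Subgroup.map_subtype_le _

lemma pResidualIn_mono [Finite G] (hp : p.Prime) {H K : Subgroup G} (hHK : H ≤ K) :
    pResidualIn p H ≤ pResidualIn p K := by
  rw [pResidualIn_eq_closure hp, pResidualIn_eq_closure hp]
  exact Subgroup.closure_mono (fun x hx => ⟨hHK hx.1, hx.2⟩)

lemma pResidualIn_conj_mem [Finite G] (hp : p.Prime) {H : Subgroup G} {m r : G}
    (hm : m ∈ H) (hr : r ∈ pResidualIn p H) : m * r * m⁻¹ ∈ pResidualIn p H := by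
  rw [pResidualIn_eq_closure hp] at hr ⊢
  have h1 : (Subgroup.closure (pSet p H)).map (MulAut.conj m).toMonoidHom =
      Subgroup.closure ((MulAut.conj m).toMonoidHom '' pSet p H) := MonoidHom.map_closure _ _
  have h2 : (MulAut.conj m).toMonoidHom '' pSet p H ⊆ pSet p H := by
    rintro _ ⟨y, ⟨hyH, hyo⟩, rfl⟩
    refine ⟨?_, ?_⟩
    · simpa [MulAut.conj_apply] using H.mul_mem (H.mul_mem hm hyH) (H.inv_mem hm)
    · simpa [MulAut.conj_apply, orderOf_conj'] using hyo
  have h3 : (Subgroup.closure (pSet p H)).map (MulAut.conj m).toMonoidHom ≤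
      Subgroup.closure (pSet p H) := by
    rw [h1]; exact Subgroup.closure_mono h2
  exact h3 ⟨r, hr, by simp [MulAut.conj_apply]⟩

lemma exists_pow_mem_pResidualIn [Finite G] (hp : p.Prime) {H : Subgroup G} {x : G}
    (hx : x ∈ H) : ∃ k, x ^ p ^ k ∈ pResidualIn p H := by
  obtain ⟨k, hk⟩ := exists_pow_orderOf_not_dvd hp x
  refine ⟨k, ?_⟩
  rw [pResidualIn_eq_closure hp]
  exact Subgroup.subset_closure ⟨H.pow_mem hx _, hk⟩

end ConjSub

section Descend

variable {G : Type*} [Group G] {p : ℕ}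

lemma step_descend (hp : p.Prime) {A B : Subgroup G} (hAB : A ≤ B)
    (hN : (A.subgroupOf B).Normal) (hrel : A.relIndex B = p) {x : G}
    (hxB : x ∈ B) (hxo : ¬ p ∣ orderOf x) : x ∈ A := by
  haveI := hN
  set y : B ⧸ A.subgroupOf B := QuotientGroup.mk ⟨x, hxB⟩ with hy
  have hcard : Nat.card (B ⧸ A.subgroupOf B) = p := by
    rw [← Subgroup.index_eq_card]; exact hrel
  have h1 : orderOf y ∣ p := hcard ▸ orderOf_dvd_natCard y
  have h2 : orderOf y ∣ orderOf x := by
    have h3 := orderOf_map_dvd (QuotientGroup.mk' (A.subgroupOf B)) (⟨x, hxB⟩ : B)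
    rwa [← Subgroup.orderOf_coe (⟨x, hxB⟩ : B)] at h3
  rcases (Nat.dvd_prime hp).mp h1 with h | h
  · have : y = 1 := orderOf_eq_one_iff.mp h
    rw [hy, QuotientGroup.eq_one_iff, mem_subgroupOf] at this
    exact this
  · exact absurd (h ▸ h2) hxo

lemma psub_le {K H : Subgroup G} (h : IsPSubnormalIn p K H) : K ≤ H := by
  obtain ⟨t, f, h0, hlast, hstep⟩ := h
  have key : ∀ i : Fin (t + 1), f 0 ≤ f i := by
    intro i
    induction i using Fin.induction with
    | zero => exact le_refl _
    | succ i hi => exact hi.trans (hstep i).1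
  rw [← h0, ← hlast]
  exact key _

lemma chain_descend (hp : p.Prime) {K H : Subgroup G} (h : IsPSubnormalIn p K H)
    {x : G} (hxH : x ∈ H) (hxo : ¬ p ∣ orderOf x) : x ∈ K := by
  obtain ⟨t, f, h0, hlast, hstep⟩ := h
  have key : ∀ i : Fin (t + 1), x ∈ f i := by
    intro i
    induction i using Fin.reverseInduction with
    | last => rw [hlast]; exact hxH
    | cast i hi => exact step_descend hp (hstep i).1 (hstep i).2.1 (hstep i).2.2 hi hxo
  rw [← h0]
  exact key 0

lemma psub_pResidualIn_eq [Finite G] (hp : p.Prime) {K H : Subgroup G}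
    (h : IsPSubnormalIn p K H) : pResidualIn p K = pResidualIn p H := by
  apply le_antisymm (pResidualIn_mono hp (psub_le h))
  rw [pResidualIn_eq_closure hp K, pResidualIn_eq_closure hp H]
  refine (Subgroup.closure_le _).2 ?_
  rintro x ⟨hxH, hxo⟩
  exact Subgroup.subset_closure ⟨chain_descend hp h hxH hxo, hxo⟩

lemma psub_cons {A B C : Subgroup G} (h : IsPSubnormalIn p B C) (hAB : A ≤ B)
    (hN : (A.subgroupOf B).Normal) (hrel : A.relIndex B = p) : IsPSubnormalIn p A C := by
  obtain ⟨t, f, h0, hlast, hstep⟩ := h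
  refine ⟨t + 1, Fin.cases A f, by simp, ?_, ?_⟩
  · show Fin.cases A f (Fin.last (t + 1)) = C
    rw [← Fin.succ_last, Fin.cases_succ]
    exact hlast
  · intro i
    refine Fin.cases ?_ ?_ i
    · simp only [Fin.castSucc_zero, Fin.cases_zero, Fin.cases_succ]
      subst h0
      exact ⟨hAB, hN, hrel⟩
    · intro j
      simp only [← Fin.succ_castSucc, Fin.cases_succ]
      exact hstep j

end Descend

section PGroup

variable {P : Type*} [Group P] {p : ℕ}

lemma pgroup_step [Finite P] (hp : p.Prime) (hP : IsPGroup p P) {A : Subgroup P}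
    (hA : A ≠ ⊤) : ∃ E : Subgroup P, A ≤ E ∧ (A.subgroupOf E).Normal ∧ A.relIndex E = p := by
  haveI : Fact p.Prime := ⟨hp⟩
  haveI : Group.IsNilpotent P := hP.isNilpotent
  have hnc : NormalizerCondition P := normalizerCondition_of_isNilpotent
  have hlt : A < normalizer (A : Set P) := hnc A (lt_top_iff_ne_top.2 hA)
  haveI hAnorm : (A.subgroupOf (normalizer (A : Set P))).Normal := Subgroup.normal_in_normalizer
  set W := normalizer (A : Set P) with hW
  set π := QuotientGroup.mk' (A.subgroupOf W) with hπ
  have hV : IsPGroup p (W ⧸ A.subgroupOf W) := (hP.to_subgroup W).to_quotient _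
  obtain ⟨w, hwW, hwA⟩ := SetLike.exists_of_lt hlt
  have hne : π ⟨w, hwW⟩ ≠ 1 := by
    rw [hπ, QuotientGroup.mk'_apply, Ne, QuotientGroup.eq_one_iff, mem_subgroupOf]
    exact hwA
  haveI : Nontrivial (W ⧸ A.subgroupOf W) := ⟨⟨_, 1, hne⟩⟩
  have hdvd : p ∣ Nat.card (W ⧸ A.subgroupOf W) := by
    obtain ⟨n, hn0, hcard⟩ := hV.nontrivial_iff_card.mp inferInstance
    rw [hcard]
    exact dvd_pow_self p hn0.ne'
  obtain ⟨z, hz⟩ := exists_prime_orderOf_dvd_card' p hdvd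
  refine ⟨(Subgroup.comap π (Subgroup.zpowers z)).map W.subtype, ?_, ?_, ?_⟩
  · intro a ha
    refine ⟨⟨a, le_normalizer ha⟩, ?_, rfl⟩
    have h1 : π ⟨a, le_normalizer ha⟩ = 1 := by
      rw [hπ, QuotientGroup.mk'_apply, QuotientGroup.eq_one_iff, mem_subgroupOf]
      exact ha
    rw [SetLike.mem_coe, mem_comap, h1]
    exact one_mem _
  · apply subgroupOf_normal_of_conj
    intro b hb a haA
    have hbW : b ∈ W := Subgroup.map_subtype_le _ hb
    exact (Subgroup.mem_normalizer_iff.mp hbW a).mp haA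
  · have h2 := relindex_map_subtype W (A.subgroupOf W) (Subgroup.comap π (Subgroup.zpowers z))
    rw [subgroupOf_map_subtype, inf_of_le_left le_normalizer] at h2
    calc A.relIndex ((Subgroup.comap π (Subgroup.zpowers z)).map W.subtype)
        = (A.subgroupOf W).relIndex (Subgroup.comap π (Subgroup.zpowers z)) := h2
      _ = (π.ker).relIndex (Subgroup.comap π (Subgroup.zpowers z)) :=
          congrArg (fun S : Subgroup W => S.relIndex (Subgroup.comap π (Subgroup.zpowers z)))
            (QuotientGroup.ker_mk' (A.subgroupOf W)).symm
      _ = Nat.card ((Subgroup.comap π (Subgroup.zpowers z)).map π) := relIndex_ker _ π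
      _ = Nat.card (Subgroup.zpowers z) := by
          rw [map_comap_eq_self_of_surjective (QuotientGroup.mk'_surjective _)]
      _ = p := by rw [Nat.card_zpowers, hz]

lemma pgroup_psubnormal [Finite P] (hp : p.Prime) (hP : IsPGroup p P) (A : Subgroup P) :
    IsPSubnormalIn p A ⊤ := by
  generalize hn : A.index = n
  induction n using Nat.strong_induction_on generalizing A with
  | _ n ih =>
    by_cases hA : A = ⊤
    · subst hA
      exact ⟨0, fun _ => ⊤, rfl, rfl, fun i => i.elim0⟩
    · obtain ⟨E, hAE, hN, hrel⟩ := pgroup_step hp hP hA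
      have hE0 : E.index ≠ 0 := Subgroup.index_ne_zero_of_finite
      have hmul : p * E.index = n := by
        rw [← hn, ← relIndex_mul_index hAE, hrel]
      have hlt : E.index < n := by
        have h2 := hp.two_le
        have h4 : E.index < p * E.index := by
          calc E.index = 1 * E.index := (one_mul _).symm
          _ < p * E.index := (Nat.mul_lt_mul_right (Nat.pos_of_ne_zero hE0)).mpr (by omega)
        omega
      exact psub_cons (ih E.index hlt E rfl) hAE hN hrel

end PGroup

section Transfer

variable {G : Type*} [Group G] {p : ℕ}

lemma psub_map_subtype {W : Subgroup G} {A B : Subgroup W}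
    (h : IsPSubnormalIn p A B) : IsPSubnormalIn p (A.map W.subtype) (B.map W.subtype) := by
  obtain ⟨t, f, h0, hlast, hstep⟩ := h
  refine ⟨t, fun i => (f i).map W.subtype, by simp only [h0], by simp only [hlast], fun i => ?_⟩
  obtain ⟨hle, hN, hrel⟩ := hstep i
  refine ⟨Subgroup.map_mono hle, ?_, ?_⟩
  · apply subgroupOf_normal_of_conj
    rintro b hb a ha
    obtain ⟨y, hy, rfl⟩ := ha
    obtain ⟨w, hw, rfl⟩ := hb
    exact ⟨w * y * w⁻¹, conj_mem_of_subgroupOf_normal hN hy (hle hy) hw, by simp⟩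
  · rw [relindex_map_subtype]
    exact hrel

lemma psub_comap_surjective {M Q : Type*} [Group M] [Group Q] {π : M →* Q}
    (hsurj : Function.Surjective π) {A B : Subgroup Q}
    (h : IsPSubnormalIn p A B) : IsPSubnormalIn p (A.comap π) (B.comap π) := by
  obtain ⟨t, f, h0, hlast, hstep⟩ := h
  refine ⟨t, fun i => (f i).comap π, by simp only [h0], by simp only [hlast], fun i => ?_⟩
  obtain ⟨hle, hN, hrel⟩ := hstep i
  refine ⟨Subgroup.comap_mono hle, ?_, ?_⟩
  · apply subgroupOf_normal_of_conj
    intro b hb a ha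
    have h1 : π a ∈ f i.castSucc := ha
    have h2 : π b ∈ f i.succ := hb
    have := conj_mem_of_subgroupOf_normal hN h1 (hle h1) h2
    simpa [mem_comap] using this
  · rw [relIndex_comap, map_comap_eq_self_of_surjective hsurj]
    exact hrel

lemma psub_of_pgroup_quotient [Finite G] (hp : p.Prime) {R L M : Subgroup G}
    (hRL : R ≤ L) (hLM : L ≤ M)
    (hnorm : ∀ m ∈ M, ∀ r ∈ R, m * r * m⁻¹ ∈ R)
    (hpow : ∀ x ∈ M, ∃ k, x ^ p ^ k ∈ R) :
    IsPSubnormalIn p L M := by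
  have hRM : R ≤ M := hRL.trans hLM
  haveI hRnorm : (R.subgroupOf M).Normal := by
    apply subgroupOf_normal_of_conj
    intro b hb a ha
    exact hnorm b hb a ha
  set π := QuotientGroup.mk' (R.subgroupOf M) with hπ
  have hQ : IsPGroup p (M ⧸ R.subgroupOf M) := by
    intro q
    obtain ⟨m, rfl⟩ := QuotientGroup.mk'_surjective (R.subgroupOf M) q
    obtain ⟨k, hk⟩ := hpow (m : G) m.2
    refine ⟨k, ?_⟩
    rw [← map_pow, QuotientGroup.mk'_apply, QuotientGroup.eq_one_iff, mem_subgroupOf]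
    simpa using hk
  have h1 : IsPSubnormalIn p ((L.subgroupOf M).map π) ⊤ := pgroup_psubnormal hp hQ _
  have h2 := psub_comap_surjective (QuotientGroup.mk'_surjective (R.subgroupOf M)) h1
  have h3 : Subgroup.comap π ((L.subgroupOf M).map π) = L.subgroupOf M := by
    rw [Subgroup.comap_map_eq, hπ, QuotientGroup.ker_mk']
    refine sup_eq_left.2 ?_
    intro r hr
    rw [mem_subgroupOf] at hr ⊢
    exact hRL hr
  have h4 : Subgroup.comap π (⊤ : Subgroup (M ⧸ R.subgroupOf M)) = ⊤ := Subgroup.comap_top _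
  rw [h3, h4] at h2
  have h5 := psub_map_subtype h2
  rw [subgroupOf_map_subtype, inf_of_le_left hLM] at h5
  have h6 : (⊤ : Subgroup M).map M.subtype = M := by
    ext x
    simp [Subgroup.mem_map]
  rwa [h6] at h5

end Transfer

/-- For a finite group `G`, a prime `p` and subgroups `H, K ≤ G`, there
exists `g ∈ G` such that `H ∩ gKg⁻¹` is a `p`-subnormal subgroup of both `H` and `gKg⁻¹`
if and only if `O^p(H)` and `O^p(K)` are conjugate subgroups of `G`. -/
theorem stmt4 (G : Type*) [Group G] [Finite G] (p : ℕ) (hp : p.Prime) (H K : Subgroup G) :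
    (∃ g : G, IsPSubnormalIn p (H ⊓ conjSub g K) H ∧
        IsPSubnormalIn p (H ⊓ conjSub g K) (conjSub g K)) ↔
      (∃ g : G, conjSub g (pResidualIn p H) = pResidualIn p K) := by
  constructor
  · rintro ⟨g, h1, h2⟩
    have e1 : pResidualIn p (H ⊓ conjSub g K) = pResidualIn p H := psub_pResidualIn_eq hp h1
    have e2 : pResidualIn p (H ⊓ conjSub g K) = pResidualIn p (conjSub g K) :=
      psub_pResidualIn_eq hp h2
    have e3 : pResidualIn p H = conjSub g (pResidualIn p K) := by
      rw [← e1, e2, pResidualIn_conjSub hp]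
    refine ⟨g⁻¹, ?_⟩
    rw [e3, conjSub_conjSub, inv_mul_cancel, conjSub_one]
  · rintro ⟨g, hg⟩
    refine ⟨g⁻¹, ?_, ?_⟩ <;>
    · set K₂ := conjSub g⁻¹ K with hK2
      have hRK2 : pResidualIn p K₂ = pResidualIn p H := by
        rw [hK2, ← pResidualIn_conjSub hp, ← hg, conjSub_conjSub, inv_mul_cancel, conjSub_one]
      have hRH : pResidualIn p H ≤ H := pResidualIn_le H
      have hRK : pResidualIn p H ≤ K₂ := by
        rw [← hRK2]; exact pResidualIn_le K₂
      have hRL : pResidualIn p H ≤ H ⊓ K₂ := le_inf hRH hRK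
      first
      | exact psub_of_pgroup_quotient hp hRL inf_le_left
          (fun m hm r hr => pResidualIn_conj_mem hp hm hr)
          (fun x hx => exists_pow_mem_pResidualIn hp hx)
      | exact psub_of_pgroup_quotient hp hRL inf_le_right
          (fun m hm r hr => by
            rw [← hRK2] at hr ⊢
            exact pResidualIn_conj_mem hp hm hr)
          (fun x hx => by
            rw [← hRK2]
            exact exists_pow_mem_pResidualIn hp hx)
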